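/- Let H be a complex Hilbert space and A₀, A₁, B₀, B₁ bounded operators on H, each selfadjoint with A_i² = B_j² = 1, and satisfying A_i B_j = B_j A_i for all i, j ∈ {0,1}. Let ξ ∈ H be a unit vector with ⟨(A₀B₀ + A₀B₁ + A₁B₀ − A₁B₁)ξ, ξ⟩ = 2√2. Then (A₀A₁ + A₁A₀)ξ = 0 and (B₀B₁ + B₁B₀)ξ = 0. -/

import Mathlib

/-- Let `A₀, A₁, B₀, B₁` be selfadjoint unitaries on a complex Hilbert space `H`, with each
`Aᵢ` commuting with each `Bⱼ`, and let `ξ` be a unit vector with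
`⟨(A₀B₀ + A₀B₁ + A₁B₀ − A₁B₁)ξ, ξ⟩ = 2√2`.  Then `(A₀A₁ + A₁A₀)ξ = 0` and
`(B₀B₁ + B₁B₀)ξ = 0`. -/
theorem stmt_8 {H : Type*} [NormedAddCommGroup H] [InnerProductSpace ℂ H] [CompleteSpace H]
    (A₀ A₁ B₀ B₁ : H →L[ℂ] H)
    (hA₀sa : IsSelfAdjoint A₀) (hA₁sa : IsSelfAdjoint A₁)
    (hB₀sa : IsSelfAdjoint B₀) (hB₁sa : IsSelfAdjoint B₁)
    (hA₀ : A₀ * A₀ = 1) (hA₁ : A₁ * A₁ = 1) (hB₀ : B₀ * B₀ = 1) (hB₁ : B₁ * B₁ = 1)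
    (h₀₀ : A₀ * B₀ = B₀ * A₀) (h₀₁ : A₀ * B₁ = B₁ * A₀)
    (h₁₀ : A₁ * B₀ = B₀ * A₁) (h₁₁ : A₁ * B₁ = B₁ * A₁)
    (ξ : H) (hξ : ‖ξ‖ = 1)
    (hval : (inner ℂ ((A₀ * B₀ + A₀ * B₁ + A₁ * B₀ - A₁ * B₁) ξ) ξ : ℂ)
      = ((2 * Real.sqrt 2 : ℝ) : ℂ)) :
    (A₀ * A₁ + A₁ * A₀) ξ = 0 ∧ (B₀ * B₁ + B₁ * B₀) ξ = 0 := by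
  set s : ℂ := ((Real.sqrt 2 : ℝ) : ℂ) with hs_def
  have hs : s * s = 2 := by
    rw [hs_def, ← Complex.ofReal_mul, Real.mul_self_sqrt (by norm_num)]
    norm_num
  set P : H →L[ℂ] H := s • A₀ - B₀ - B₁ with hP_def
  set Q : H →L[ℂ] H := s • A₁ - B₀ + B₁ with hQ_def
  have hstar_s : star s = s := by rw [hs_def]; exact Complex.conj_ofReal _
  have hPsa : IsSelfAdjoint P := ((IsSelfAdjoint.smul hstar_s hA₀sa).sub hB₀sa).sub hB₁sa
  have hQsa : IsSelfAdjoint Q := ((IsSelfAdjoint.smul hstar_s hA₁sa).sub hB₀sa).add hB₁sa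
  have key : P * P + Q * Q
      = (8:ℂ) • (1 : H →L[ℂ] H) - (2*s) • (A₀*B₀ + A₀*B₁ + A₁*B₀ - A₁*B₁) := by
    rw [hP_def, hQ_def]
    simp only [mul_sub, sub_mul, mul_add, add_mul, smul_mul_assoc, mul_smul_comm, smul_smul,
      hs, hA₀, hA₁, hB₀, hB₁, ← h₀₀, ← h₀₁, ← h₁₀, ← h₁₁, smul_add, smul_sub]
    module
  have hinner0 : (inner ℂ ((P * P + Q * Q) ξ) ξ : ℂ) = 0 := by
    have hlift : ((2 * Real.sqrt 2 : ℝ) : ℂ) = 2 * s := by push_cast; rw [hs_def]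
    rw [key, ContinuousLinearMap.sub_apply, inner_sub_left, ContinuousLinearMap.smul_apply,
      ContinuousLinearMap.smul_apply, ContinuousLinearMap.one_apply, inner_smul_left,
      inner_smul_left, hval, hlift, inner_self_eq_norm_sq_to_K, hξ]
    simp only [map_mul, starRingEnd_apply, hstar_s, map_ofNat]
    push_cast
    linear_combination (-4:ℂ) * hs
  have hsq : ∀ (T : H →L[ℂ] H), IsSelfAdjoint T →
      (inner ℂ ((T * T) ξ) ξ : ℂ) = ((‖T ξ‖^2 : ℝ) : ℂ) := by
    intro T hT
    rw [ContinuousLinearMap.mul_apply]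
    nth_rewrite 1 [← hT.adjoint_eq]
    rw [ContinuousLinearMap.adjoint_inner_left, inner_self_eq_norm_sq_to_K]
    norm_cast
  have hPQ : ((‖P ξ‖^2 : ℝ) : ℂ) + ((‖Q ξ‖^2 : ℝ) : ℂ) = 0 := by
    rw [← hsq P hPsa, ← hsq Q hQsa, ← inner_add_left, ← ContinuousLinearMap.add_apply]
    exact hinner0
  have hPQ' : ‖P ξ‖^2 + ‖Q ξ‖^2 = 0 := by
    have := hPQ
    push_cast at this
    exact_mod_cast this
  have hP0 : P ξ = 0 := by
    have h1 : ‖P ξ‖ = 0 := by nlinarith [sq_nonneg ‖P ξ‖, sq_nonneg ‖Q ξ‖, norm_nonneg (P ξ), norm_nonneg (Q ξ)]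
    simpa using h1
  have hQ0 : Q ξ = 0 := by
    have h1 : ‖Q ξ‖ = 0 := by nlinarith [sq_nonneg ‖P ξ‖, sq_nonneg ‖Q ξ‖, norm_nonneg (P ξ), norm_nonneg (Q ξ)]
    simpa using h1
  have hPv : s • A₀ ξ = B₀ ξ + B₁ ξ := by
    rw [hP_def] at hP0
    simp only [ContinuousLinearMap.sub_apply, ContinuousLinearMap.smul_apply] at hP0
    linear_combination (norm := module) hP0
  have hQv : s • A₁ ξ = B₀ ξ - B₁ ξ := by
    rw [hQ_def] at hQ0
    simp only [ContinuousLinearMap.sub_apply, ContinuousLinearMap.add_apply,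
      ContinuousLinearMap.smul_apply] at hQ0
    linear_combination (norm := module) hQ0
  have appA₀ : ∀ x, A₀ (A₀ x) = x := fun x => by
    have := congrArg (fun T => T x) hA₀; simpa using this
  have appB₀ : ∀ x, B₀ (B₀ x) = x := fun x => by
    have := congrArg (fun T => T x) hB₀; simpa using this
  have appB₁ : ∀ x, B₁ (B₁ x) = x := fun x => by
    have := congrArg (fun T => T x) hB₁; simpa using this
  have c₀₀ : ∀ x, A₀ (B₀ x) = B₀ (A₀ x) := fun x => by
    have := congrArg (fun T => T x) h₀₀; simpa using this
  have c₀₁ : ∀ x, A₀ (B₁ x) = B₁ (A₀ x) := fun x => by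
    have := congrArg (fun T => T x) h₀₁; simpa using this
  have c₁₀ : ∀ x, A₁ (B₀ x) = B₀ (A₁ x) := fun x => by
    have := congrArg (fun T => T x) h₁₀; simpa using this
  have c₁₁ : ∀ x, A₁ (B₁ x) = B₁ (A₁ x) := fun x => by
    have := congrArg (fun T => T x) h₁₁; simpa using this
  have e1 : (2:ℂ) • (A₀ (A₁ ξ)) = B₀ (B₁ ξ) - B₁ (B₀ ξ) := by
    calc (2:ℂ) • (A₀ (A₁ ξ)) = s • A₀ (s • A₁ ξ) := by
          rw [map_smul, smul_smul, hs]
      _ = s • A₀ (B₀ ξ - B₁ ξ) := by rw [hQv]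
      _ = s • (B₀ (A₀ ξ)) - s • (B₁ (A₀ ξ)) := by rw [map_sub, smul_sub, c₀₀, c₀₁]
      _ = B₀ (s • A₀ ξ) - B₁ (s • A₀ ξ) := by rw [map_smul, map_smul]
      _ = B₀ (B₀ ξ + B₁ ξ) - B₁ (B₀ ξ + B₁ ξ) := by rw [hPv]
      _ = (ξ + B₀ (B₁ ξ)) - (B₁ (B₀ ξ) + ξ) := by rw [map_add, map_add, appB₀, appB₁]
      _ = B₀ (B₁ ξ) - B₁ (B₀ ξ) := by abel
  have e2 : (2:ℂ) • (A₁ (A₀ ξ)) = B₁ (B₀ ξ) - B₀ (B₁ ξ) := by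
    calc (2:ℂ) • (A₁ (A₀ ξ)) = s • A₁ (s • A₀ ξ) := by
          rw [map_smul, smul_smul, hs]
      _ = s • A₁ (B₀ ξ + B₁ ξ) := by rw [hPv]
      _ = s • (B₀ (A₁ ξ)) + s • (B₁ (A₁ ξ)) := by rw [map_add, smul_add, c₁₀, c₁₁]
      _ = B₀ (s • A₁ ξ) + B₁ (s • A₁ ξ) := by rw [map_smul, map_smul]
      _ = B₀ (B₀ ξ - B₁ ξ) + B₁ (B₀ ξ - B₁ ξ) := by rw [hQv]
      _ = (ξ - B₀ (B₁ ξ)) + (B₁ (B₀ ξ) - ξ) := by rw [map_sub, map_sub, appB₀, appB₁]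
      _ = B₁ (B₀ ξ) - B₀ (B₁ ξ) := by abel
  have e3 : (2:ℂ) • ξ = (ξ + B₀ (B₁ ξ)) + (B₁ (B₀ ξ) + ξ) := by
    calc (2:ℂ) • ξ = (2:ℂ) • (A₀ (A₀ ξ)) := by rw [appA₀]
      _ = s • A₀ (s • A₀ ξ) := by rw [map_smul, smul_smul, hs]
      _ = s • A₀ (B₀ ξ + B₁ ξ) := by rw [hPv]
      _ = s • (B₀ (A₀ ξ)) + s • (B₁ (A₀ ξ)) := by rw [map_add, smul_add, c₀₀, c₀₁]
      _ = B₀ (s • A₀ ξ) + B₁ (s • A₀ ξ) := by rw [map_smul, map_smul]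
      _ = B₀ (B₀ ξ + B₁ ξ) + B₁ (B₀ ξ + B₁ ξ) := by rw [hPv]
      _ = (ξ + B₀ (B₁ ξ)) + (B₁ (B₀ ξ) + ξ) := by rw [map_add, map_add, appB₀, appB₁]
  constructor
  · have : (2:ℂ) • ((A₀ * A₁ + A₁ * A₀) ξ) = 0 := by
      simp only [ContinuousLinearMap.add_apply, ContinuousLinearMap.mul_apply, smul_add, e1, e2]
      abel
    have h2 : (2:ℂ) ≠ 0 := by norm_num
    exact (smul_eq_zero.mp this).resolve_left h2
  · have hsum : B₀ (B₁ ξ) + B₁ (B₀ ξ) = 0 := by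
      have h2 : (2:ℂ) • ξ = ξ + ξ := two_smul ℂ ξ
      rw [h2] at e3
      calc B₀ (B₁ ξ) + B₁ (B₀ ξ)
          = (ξ + B₀ (B₁ ξ) + (B₁ (B₀ ξ) + ξ)) - (ξ + ξ) := by abel
        _ = (ξ + ξ) - (ξ + ξ) := by rw [← e3]
        _ = 0 := sub_self _
    simpa only [ContinuousLinearMap.add_apply, ContinuousLinearMap.mul_apply] using hsum
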